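/- Let f(ρ) = log 2 − (1/2)[ρ log ρ + (1−ρ) log(1−ρ)] and g(ρ) = ((1+ρ)/2) log(1+ρ) − ρ log ρ − (1 − ρ/2) log(2−ρ). For every integer k ≥ 2, the equation f(ρ) + k·g(ρ) = 0 has a unique root ρ(k) in (0,1), and ρ(k) is strictly increasing in k. -/

import Mathlib

noncomputable def fExp (ρ : ℝ) : ℝ :=
  Real.log 2 - (1/2) * (ρ * Real.log ρ + (1-ρ) * Real.log (1-ρ))

noncomputable def gExp (ρ : ℝ) : ℝ :=
  ((1+ρ)/2) * Real.log (1+ρ) - ρ * Real.log ρ - (1-ρ/2) * Real.log (2-ρ)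

lemma gExp_eq : gExp = fun ρ : ℝ =>
    (1+ρ) * Real.log (1+ρ) / 2 - ρ * Real.log ρ - (2-ρ) * Real.log (2-ρ) / 2 := by
  funext ρ; unfold gExp; ring

lemma fcont : Continuous fExp := by
  unfold fExp
  exact continuous_const.sub (continuous_const.mul (Real.continuous_mul_log.add
    (Real.continuous_mul_log.comp (continuous_const.sub continuous_id))))

lemma gcont : Continuous gExp := by
  rw [gExp_eq]
  exact (((Real.continuous_mul_log.comp (continuous_const.add continuous_id)).div_const 2).sub
    Real.continuous_mul_log).sub
    ((Real.continuous_mul_log.comp (continuous_const.sub continuous_id)).div_const 2)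

lemma f_deriv {x : ℝ} (h0 : 0 < x) (h1 : x < 1) :
    HasDerivAt fExp ((Real.log (1-x) - Real.log x)/2) x := by
  have hx : x ≠ 0 := ne_of_gt h0
  have hx1 : (1:ℝ) - x ≠ 0 := by intro h; linarith [h]
  have d1 : HasDerivAt (fun y : ℝ => y * Real.log y) (Real.log x + 1) x :=
    Real.hasDerivAt_mul_log hx
  have dsub : HasDerivAt (fun y : ℝ => 1 - y) (0 - 1) x :=
    (hasDerivAt_const x 1).sub (hasDerivAt_id x)
  have d2 : HasDerivAt (fun y : ℝ => (1-y) * Real.log (1-y))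
      ((Real.log (1-x) + 1) * (0 - 1)) x :=
    (Real.hasDerivAt_mul_log hx1).comp x dsub
  have hsum := (d1.add d2).const_mul (1/2 : ℝ)
  have := (hasDerivAt_const x (Real.log 2)).sub hsum
  exact this.congr_deriv (by ring)

lemma g_deriv {x : ℝ} (h0 : 0 < x) (h1 : x < 1) :
    HasDerivAt gExp ((Real.log (1+x) + Real.log (2-x))/2 - Real.log x) x := by
  have hx : x ≠ 0 := ne_of_gt h0
  have hx1 : (1:ℝ) + x ≠ 0 := by positivity
  have hx2 : (2:ℝ) - x ≠ 0 := by intro h; linarith [h]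
  have dadd : HasDerivAt (fun y : ℝ => 1 + y) (0 + 1) x :=
    (hasDerivAt_const x 1).add (hasDerivAt_id x)
  have dsub : HasDerivAt (fun y : ℝ => 2 - y) (0 - 1) x :=
    (hasDerivAt_const x 2).sub (hasDerivAt_id x)
  have d1 : HasDerivAt (fun y : ℝ => (1+y) * Real.log (1+y))
      ((Real.log (1+x) + 1) * (0 + 1)) x :=
    (Real.hasDerivAt_mul_log hx1).comp x dadd
  have d2 : HasDerivAt (fun y : ℝ => y * Real.log y) (Real.log x + 1) x :=
    Real.hasDerivAt_mul_log hx
  have d3 : HasDerivAt (fun y : ℝ => (2-y) * Real.log (2-y))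
      ((Real.log (2-x) + 1) * (0 - 1)) x :=
    (Real.hasDerivAt_mul_log hx2).comp x dsub
  have := ((d1.div_const 2).sub d2).sub (d3.div_const 2)
  rw [gExp_eq]
  exact this.congr_deriv (by ring)

lemma f_pos {x : ℝ} (h0 : 0 < x) (h1 : x < 1) : 0 < fExp x := by
  have l1 : Real.log x < 0 := Real.log_neg h0 h1
  have l2 : Real.log (1-x) < 0 := Real.log_neg (by linarith) (by linarith)
  have m1 : x * Real.log x < 0 := mul_neg_of_pos_of_neg h0 l1
  have m2 : (1-x) * Real.log (1-x) < 0 := mul_neg_of_pos_of_neg (by linarith) l2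
  have hl2 : 0 < Real.log 2 := Real.log_pos (by norm_num)
  unfold fExp
  nlinarith

lemma gd_pos {x : ℝ} (h0 : 0 < x) (h1 : x < 1) :
    0 < (Real.log (1+x) + Real.log (2-x))/2 - Real.log x := by
  have key : x * x < (1+x) * (2-x) := by nlinarith
  have h2 : Real.log (x*x) < Real.log ((1+x)*(2-x)) := Real.log_lt_log (by positivity) key
  rw [Real.log_mul (ne_of_gt h0) (ne_of_gt h0),
    Real.log_mul (by positivity) (by intro h; linarith [h])] at h2
  linarith

lemma h_mono (k : ℕ) :
    StrictMonoOn (fun x => fExp x + (k:ℝ) * gExp x) (Set.Icc 0 (1/2 : ℝ)) := by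
  apply strictMonoOn_of_deriv_pos (convex_Icc _ _)
  · exact (fcont.add (continuous_const.mul gcont)).continuousOn
  · intro x hx
    rw [interior_Icc] at hx
    obtain ⟨hx0, hx1⟩ := hx
    have h1 : x < 1 := by linarith
    have hd : HasDerivAt (fun x => fExp x + (k:ℝ) * gExp x)
        ((Real.log (1-x) - Real.log x)/2 +
          (k:ℝ) * ((Real.log (1+x) + Real.log (2-x))/2 - Real.log x)) x :=
      (f_deriv hx0 h1).add ((g_deriv hx0 h1).const_mul (k:ℝ))
    rw [hd.deriv]
    have hf' : 0 < (Real.log (1-x) - Real.log x)/2 := by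
      have := Real.log_lt_log hx0 (show x < 1 - x by linarith)
      linarith
    have hg' := gd_pos hx0 h1
    have hk0 : (0:ℝ) ≤ (k:ℝ) := Nat.cast_nonneg k
    nlinarith

lemma g_mono : StrictMonoOn gExp (Set.Icc 0 (1:ℝ)) := by
  apply strictMonoOn_of_deriv_pos (convex_Icc _ _) gcont.continuousOn
  intro x hx
  rw [interior_Icc] at hx
  rw [(g_deriv hx.1 hx.2).deriv]
  exact gd_pos hx.1 hx.2

lemma f_zero : fExp 0 = Real.log 2 := by
  unfold fExp; simp

lemma g_zero : gExp 0 = -Real.log 2 := by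
  unfold gExp; simp

lemma g_half : gExp (1/2) = Real.log 2 / 2 := by
  unfold gExp
  have : Real.log (1/2 : ℝ) = -Real.log 2 := by
    rw [show (1:ℝ)/2 = 2⁻¹ by norm_num, Real.log_inv]
  rw [show (1:ℝ) + 1/2 = 3/2 by norm_num, show (2:ℝ) - 1/2 = 3/2 by norm_num, this]
  ring

lemma exists_root (k : ℕ) (hk : 2 ≤ k) :
    ∃ x ∈ Set.Ioo (0:ℝ) (1/2), fExp x + (k:ℝ) * gExp x = 0 := by
  set h : ℝ → ℝ := fun x => fExp x + (k:ℝ) * gExp x with hh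
  have hcont : ContinuousOn h (Set.Icc 0 (1/2:ℝ)) :=
    (fcont.add (continuous_const.mul gcont)).continuousOn
  have hk2 : (2:ℝ) ≤ (k:ℝ) := by exact_mod_cast hk
  have hl2 : 0 < Real.log 2 := Real.log_pos (by norm_num)
  have hneg : h 0 < 0 := by
    simp only [hh, f_zero, g_zero]
    nlinarith
  have hpos : 0 < h (1/2) := by
    have hf := f_pos (show (0:ℝ) < 1/2 by norm_num) (by norm_num)
    simp only [hh, g_half]
    nlinarith
  have hmem : (0:ℝ) ∈ Set.Ioo (h 0) (h (1/2)) := ⟨hneg, hpos⟩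
  obtain ⟨x, hx, hfx⟩ := intermediate_value_Ioo (by norm_num : (0:ℝ) ≤ 1/2) hcont hmem
  exact ⟨x, hx, hfx⟩

lemma root_lt_half (k : ℕ) (hk : 2 ≤ k) {ρ : ℝ} (h0 : 0 < ρ) (h1 : ρ < 1)
    (hr : fExp ρ + (k:ℝ) * gExp ρ = 0) : ρ < 1/2 := by
  by_contra h
  push_neg at h
  have hl2 : 0 < Real.log 2 := Real.log_pos (by norm_num)
  have hg : Real.log 2 / 2 ≤ gExp ρ := by
    rcases eq_or_lt_of_le h with he | hl
    · rw [← he, g_half]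
    · have := g_mono (show (1/2:ℝ) ∈ Set.Icc 0 1 by norm_num)
        (show ρ ∈ Set.Icc (0:ℝ) 1 by constructor <;> linarith) hl
      rw [g_half] at this
      linarith
  have hf := f_pos h0 h1
  have hk2 : (2:ℝ) ≤ (k:ℝ) := by exact_mod_cast hk
  nlinarith

lemma g_neg_at_root (k : ℕ) (hk : 2 ≤ k) {ρ : ℝ} (h0 : 0 < ρ) (h1 : ρ < 1)
    (hr : fExp ρ + (k:ℝ) * gExp ρ = 0) : gExp ρ < 0 := by
  by_contra h
  push_neg at h
  have hf := f_pos h0 h1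
  have hk2 : (0:ℝ) ≤ (k:ℝ) := Nat.cast_nonneg k
  nlinarith

theorem stmt_8 :
    ∃ ρfun : ℕ → ℝ,
      (∀ k : ℕ, 2 ≤ k →
        ρfun k ∈ Set.Ioo (0:ℝ) 1 ∧
        fExp (ρfun k) + k * gExp (ρfun k) = 0 ∧
        (∀ ρ ∈ Set.Ioo (0:ℝ) 1, fExp ρ + k * gExp ρ = 0 → ρ = ρfun k)) ∧
      (∀ k : ℕ, 2 ≤ k → ρfun k < ρfun (k+1)) := by
  classical
  refine ⟨fun k => if h : 2 ≤ k then (exists_root k h).choose else 0, ?_, ?_⟩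
  · intro k hk
    simp only [dif_pos hk]
    obtain ⟨⟨ha0, ha1⟩, har⟩ := (exists_root k hk).choose_spec
    set a := (exists_root k hk).choose with haa
    refine ⟨⟨ha0, by linarith⟩, har, ?_⟩
    intro ρ hρ hroot
    have hρh : ρ < 1/2 := root_lt_half k hk hρ.1 hρ.2 hroot
    have h1 : ρ ∈ Set.Icc (0:ℝ) (1/2) := ⟨le_of_lt hρ.1, le_of_lt hρh⟩
    have h2 : a ∈ Set.Icc (0:ℝ) (1/2) := ⟨le_of_lt ha0, le_of_lt ha1⟩
    exact (h_mono k).injOn h1 h2 (by simp only [hroot, har])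
  · intro k hk
    have hk1 : 2 ≤ k + 1 := by omega
    simp only [dif_pos hk, dif_pos hk1]
    obtain ⟨⟨ha0, ha1⟩, har⟩ := (exists_root k hk).choose_spec
    obtain ⟨⟨hb0, hb1⟩, hbr⟩ := (exists_root (k+1) hk1).choose_spec
    set a := (exists_root k hk).choose
    set b := (exists_root (k+1) hk1).choose
    have hga : gExp a < 0 := g_neg_at_root k hk ha0 (by linarith) har
    have hva : fExp a + ((k:ℝ)+1) * gExp a < 0 := by nlinarith
    have hvb : fExp b + ((k:ℝ)+1) * gExp b = 0 := by
      have : ((k+1 : ℕ) : ℝ) = (k:ℝ) + 1 := by push_cast; ring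
      rw [← this]; exact hbr
    have ha : a ∈ Set.Icc (0:ℝ) (1/2) := ⟨le_of_lt ha0, le_of_lt ha1⟩
    have hb : b ∈ Set.Icc (0:ℝ) (1/2) := ⟨le_of_lt hb0, le_of_lt hb1⟩
    have := (h_mono (k+1)).lt_iff_lt ha hb
    push_cast at this
    rw [← this]
    linarith
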